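/- Let m ≥ 1 and suppose 𝔼[X] = 0 and 𝔼[Z] = 0. Then the Gauss-optimal estimator c₃⁽ʰ'ᴳᵒ⁾ = ( (m+2)·\overline{X²Z} − m·\overline{X²}·Z̄ ) / (m+1) is an unbiased estimator of the third cumulant C₃(x,x,z): 𝔼[c₃⁽ʰ'ᴳᵒ⁾] = 𝔼[X²Z]. -/

import Mathlib

open MeasureTheory ProbabilityTheory

lemma ennreal_conj1 : 1/(3/2 : ENNReal) = 1/3 + 1/3 := by
  rw [ENNReal.div_add_div_same, one_div, ENNReal.inv_div (by norm_num) (by norm_num)]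
  norm_num

lemma ennreal_conj2 : 1/(1 : ENNReal) = 1/(3/2) + 1/3 := by
  rw [one_div, one_div, ENNReal.inv_div (by norm_num) (by norm_num)]
  rw [ENNReal.div_add_div_same]
  norm_num
  exact (ENNReal.div_self (by norm_num) (by norm_num)).symm

theorem unbiased_c3_h_Go {Ω : Type*} [MeasurableSpace Ω] (μ : Measure Ω) [IsProbabilityMeasure μ]
    (m : ℕ) (hm : 1 ≤ m)
    (X Z : Fin m → Ω → ℝ)
    (hXmeas : ∀ i, Measurable (X i))
    (hZmeas : ∀ i, Measurable (Z i))
    (hindep : iIndepFun (fun i ω => (X i ω, Z i ω)) μ)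
    (hident : ∀ i, IdentDistrib (fun ω => (X i ω, Z i ω)) (fun ω => (X ⟨0, by omega⟩ ω, Z ⟨0, by omega⟩ ω)) μ μ)
    (hX : MemLp (X ⟨0, by omega⟩) 3 μ)
    (hZ : MemLp (Z ⟨0, by omega⟩) 3 μ)
    (hEX : (∫ ω, X ⟨0, by omega⟩ ω ∂μ) = 0) (hEZ : (∫ ω, Z ⟨0, by omega⟩ ω ∂μ) = 0) :
    (∫ ω, (((m:ℝ)+2) * ((m:ℝ)⁻¹ * ∑ i, (X i ω)^2 * Z i ω) - (m:ℝ) * ((m:ℝ)⁻¹ * ∑ i, (X i ω)^2) * ((m:ℝ)⁻¹ * ∑ i, Z i ω)) / ((m:ℝ)+1) ∂μ) = (∫ ω, (X ⟨0, by omega⟩ ω)^2 * Z ⟨0, by omega⟩ ω ∂μ) := by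
  have hm0 : (m:ℝ) ≠ 0 := Nat.cast_ne_zero.mpr (by omega)
  have hm1 : (m:ℝ) + 1 ≠ 0 := by positivity
  set i0 : Fin m := ⟨0, by omega⟩ with hi0
  set c : ℝ := ∫ ω, (X i0 ω)^2 * Z i0 ω ∂μ with hc
  -- identically distributed components
  have hXid : ∀ i, IdentDistrib (X i) (X i0) μ μ := fun i => (hident i).comp measurable_fst
  have hZid : ∀ i, IdentDistrib (Z i) (Z i0) μ μ := fun i => (hident i).comp measurable_snd
  have hXi : ∀ i, MemLp (X i) 3 μ := fun i => (hXid i).memLp_iff.mpr hX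
  have hZi : ∀ i, MemLp (Z i) 3 μ := fun i => (hZid i).memLp_iff.mpr hZ
  have hX2 : ∀ i, MemLp (fun ω => (X i ω)^2) (3/2) μ := fun i => by
    have h := (hXi i).smul (hXi i) (r := 3/2) (hpqr := ⟨by simpa only [one_div] using ennreal_conj1.symm⟩)
    simpa [smul_eq_mul, sq, Pi.mul_def] using h
  -- integrability
  have intA : ∀ i, Integrable (fun ω => (X i ω)^2 * Z i ω) μ := fun i => by
    have h := (hZi i).smul (hX2 i) (r := 1) (hpqr := ⟨by simpa only [one_div] using ennreal_conj2.symm⟩)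
    rw [memLp_one_iff_integrable] at h
    simpa [smul_eq_mul, Pi.mul_def] using h
  have intB : ∀ i, Integrable (fun ω => (X i ω)^2) μ :=
    fun i => (hX2 i).integrable
      (by rw [ENNReal.le_div_iff_mul_le (Or.inl (by norm_num)) (Or.inl (by norm_num))]; norm_num)
  have intC : ∀ i, Integrable (Z i) μ := fun i => (hZi i).integrable (by norm_num)
  -- independence for i ≠ j
  have hBCindep : ∀ i j, i ≠ j →
      IndepFun (fun ω => (X i ω)^2) (Z j) μ := fun i j hij => by
    have h := (hindep.indepFun hij).comp (φ := fun p : ℝ × ℝ => p.1^2) (ψ := Prod.snd)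
      ((measurable_fst.pow_const 2)) measurable_snd
    exact h
  have intBC : ∀ i j, Integrable (fun ω => (X i ω)^2 * Z j ω) μ := fun i j => by
    rcases eq_or_ne i j with rfl | hij
    · exact intA i
    · exact (hBCindep i j hij).integrable_mul (intB i) (intC j)
  -- integral values
  have hAval : ∀ i, (∫ ω, (X i ω)^2 * Z i ω ∂μ) = c := fun i => by
    have h : IdentDistrib (fun ω => (X i ω)^2 * Z i ω) (fun ω => (X i0 ω)^2 * Z i0 ω) μ μ :=
      (hident i).comp ((measurable_fst.pow_const 2).mul measurable_snd)
    exact h.integral_eq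
  have hCval : ∀ j, (∫ ω, Z j ω ∂μ) = 0 := fun j => (hZid j).integral_eq.trans hEZ
  have hBCval : ∀ i j, (∫ ω, (X i ω)^2 * Z j ω ∂μ) = if i = j then c else 0 := fun i j => by
    rcases eq_or_ne i j with rfl | hij
    · simp [hAval i]
    · rw [if_neg hij]
      rw [(hBCindep i j hij).integral_fun_mul_eq_mul_integral ((hXmeas i).pow_const 2).aestronglyMeasurable
        (hZmeas j).aestronglyMeasurable, hCval j, mul_zero]
  -- rewrite the integrand
  have expand : ∀ ω : Ω,
      (((m:ℝ)+2) * ((m:ℝ)⁻¹ * ∑ i, (X i ω)^2 * Z i ω)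
        - (m:ℝ) * ((m:ℝ)⁻¹ * ∑ i, (X i ω)^2) * ((m:ℝ)⁻¹ * ∑ i, Z i ω)) / ((m:ℝ)+1)
      = (((m:ℝ)+2)/((m:ℝ)*((m:ℝ)+1))) * (∑ i, (X i ω)^2 * Z i ω)
        - (1/((m:ℝ)*((m:ℝ)+1))) * (∑ i, ∑ j, (X i ω)^2 * Z j ω) := by
    intro ω
    rw [← Finset.sum_mul_sum]
    field_simp
  simp_rw [expand]
  rw [integral_sub ((integrable_finset_sum _ (fun i _ => intA i)).const_mul _)
    ((integrable_finset_sum _ (fun i _ => integrable_finset_sum _ (fun j _ => intBC i j))).const_mul _),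
    integral_const_mul, integral_const_mul,
    integral_finset_sum _ (fun i _ => intA i),
    integral_finset_sum _ (fun i _ => integrable_finset_sum _ (fun j _ => intBC i j))]
  have h1 : (∑ i : Fin m, ∫ ω, (X i ω)^2 * Z i ω ∂μ) = (m:ℝ) * c := by
    simp [hAval, Finset.card_univ]
  have h3 : (∑ i : Fin m, ∑ j : Fin m, ∫ ω, (X i ω)^2 * Z j ω ∂μ) = (m:ℝ) * c := by
    have : ∀ i : Fin m, (∑ j : Fin m, ∫ ω, (X i ω)^2 * Z j ω ∂μ) = c := fun i => by
      simp_rw [hBCval]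
      simp
    simp [this, Finset.card_univ]
  have h4 : ∀ i : Fin m, (∫ ω, ∑ j, (X i ω)^2 * Z j ω ∂μ)
      = ∑ j : Fin m, ∫ ω, (X i ω)^2 * Z j ω ∂μ := fun i =>
    integral_finset_sum _ (fun j _ => intBC i j)
  simp_rw [h4]
  rw [h1, h3]
  field_simp
  ring
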